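/- Let F be a field, let n be a nonnegative integer, and let Q, C, Z ∈ F with (Q;Q)_n ≠ 0 and (C;Q)_n ≠ 0. Then Σ_{k=0}^{n} ( (Q^{-n};Q)_k · (-1)^k · Q^{k(k-1)/2} / ( (Q;Q)_k (C;Q)_k ) ) · Z^k = (1/(C;Q)_n) · Σ_{k=0}^{n} ( (Q^{-n};Q)_k · (Z Q^{-n}/C; Q)_k / (Q;Q)_k ) · Q^k · (C Q^{n-1})^k. (Here Q is assumed invertible, and C invertible, so that Q^{-n} and the ratios make sense.) -/

import Mathlib

/-- The q-Pochhammer symbol `(a; Q)_n = ∏_{j=0}^{n-1} (1 - a Q^j)` in a field. -/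
def qPoch {F : Type*} [Field F] (a Q : F) (n : ℕ) : F := ∏ j ∈ Finset.range n, (1 - a * Q ^ j)

namespace QPochAux
variable {F : Type*} [Field F]

lemma qPoch_succ (a Q : F) (n : ℕ) : qPoch a Q (n+1) = qPoch a Q n * (1 - a * Q ^ n) :=
  Finset.prod_range_succ _ _

lemma qPoch_zero (a Q : F) : qPoch a Q 0 = 1 := rfl

lemma qPoch_add (a Q : F) (k m : ℕ) :
    qPoch a Q (k + m) = qPoch a Q k * qPoch (a * Q ^ k) Q m := by
  unfold qPoch
  rw [Finset.prod_range_add]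
  congr 1
  refine Finset.prod_congr rfl fun j _ => ?_
  rw [pow_add]; ring

lemma qPoch_ne_zero_of_le {a Q : F} {k n : ℕ} (h : k ≤ n) (hn : qPoch a Q n ≠ 0) :
    qPoch a Q k ≠ 0 := by
  obtain ⟨m, rfl⟩ := Nat.exists_eq_add_of_le h
  rw [qPoch_add] at hn
  exact left_ne_zero_of_mul hn

/-- Gaussian binomial coefficient with parameter q, as a field element. -/
def gb (q : F) : ℕ → ℕ → F
  | _, 0 => 1
  | 0, _+1 => 0
  | N+1, m+1 => gb q N (m+1) + q ^ (N-m) * gb q N m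

lemma gb_zero_right (q : F) (N : ℕ) : gb q N 0 = 1 := by cases N <;> rfl

lemma gb_eq_zero (q : F) : ∀ {N m : ℕ}, N < m → gb q N m = 0 := by
  intro N
  induction N with
  | zero => intro m h; match m, h with | m+1, _ => rfl
  | succ N ih =>
    intro m h
    match m, h with
    | m+1, h =>
      show gb q N (m+1) + q ^ (N-m) * gb q N m = 0
      rw [ih (by omega), ih (by omega)]
      ring

lemma tri (i : ℕ) : (i+1) * ((i+1) - 1) / 2 = i * (i-1) / 2 + i := by
  rw [← Nat.choose_two_right, ← Nat.choose_two_right, Nat.choose_succ_succ]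
  simp [Nat.choose_one_right]
  omega

end QPochAux

namespace QPochAux
variable {F : Type*} [Field F]

lemma gb_succ_succ (q : F) (N m : ℕ) :
    gb q (N+1) (m+1) = gb q N (m+1) + q ^ (N-m) * gb q N m := rfl

lemma gb_mul (q : F) : ∀ a b : ℕ,
    gb q (a+b) a * qPoch q q a * qPoch q q b = qPoch q q (a+b) := by
  intro a
  induction a with
  | zero => intro b; simp [gb_zero_right, qPoch_zero]
  | succ a' iha =>
    intro b
    induction b with
    | zero =>
      have h0 : gb q (a'+1) (a'+1) = gb q a' (a'+1) + q ^ (a'-a') * gb q a' a' := rfl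
      have h1 := iha 0
      simp only [Nat.add_zero, qPoch_zero, mul_one] at h1 ⊢
      rw [h0, gb_eq_zero q (by omega), qPoch_succ]
      simp only [Nat.sub_self, pow_zero]
      linear_combination (1 - q * q ^ a') * h1
    | succ b' ihb =>
      have hidx : a'+1+(b'+1) = (a'+b'+1)+1 := by omega
      rw [hidx, gb_succ_succ, show a'+b'+1-a' = b'+1 from by omega]
      have e1 : gb q (a'+b'+1) (a'+1) * qPoch q q (a'+1) * qPoch q q b'
          = qPoch q q (a'+b'+1) := by
        have := ihb; rwa [show a'+1+b' = a'+b'+1 from by omega] at this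
      have e2 : gb q (a'+b'+1) a' * qPoch q q a' * qPoch q q (b'+1)
          = qPoch q q (a'+b'+1) := by
        have := iha (b'+1); rwa [show a'+(b'+1) = a'+b'+1 from by omega] at this
      rw [qPoch_succ q q (a'+b'+1), qPoch_succ q q b', qPoch_succ q q a'] at *
      rw [pow_add, pow_add, pow_add]
      ring_nf
      ring_nf at e1 e2
      linear_combination (1 - q * q ^ b') * e1 + (q ^ b' * q * (1 - q * q ^ a')) * e2
end QPochAux

namespace QPochAux
variable {F : Type*} [Field F]

lemma qbt (q x : F) : ∀ N : ℕ,
    qPoch x q N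
      = ∑ m ∈ Finset.range (N+1), gb q N m * (-1)^m * q^(m*(m-1)/2) * x^m := by
  intro N
  induction N with
  | zero => simp [qPoch_zero, gb_zero_right]
  | succ N ih =>
    rw [Finset.sum_range_succ']
    have hsplit : ∀ i ∈ Finset.range (N+1),
        gb q (N+1) (i+1) * (-1)^(i+1) * q^((i+1)*((i+1)-1)/2) * x^(i+1)
        = (gb q N (i+1) * (-1)^(i+1) * q^((i+1)*((i+1)-1)/2) * x^(i+1))
          + (-(x*q^N)) * (gb q N i * (-1)^i * q^(i*(i-1)/2) * x^i) := by
      intro i hi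
      rw [Finset.mem_range] at hi
      rw [gb_succ_succ, tri]
      have hq : q ^ (N - i) * q ^ (i*(i-1)/2 + i) = q ^ N * q ^ (i*(i-1)/2) := by
        rw [← pow_add, ← pow_add]
        congr 1
        omega
      calc (gb q N (i+1) + q^(N-i) * gb q N i) * (-1)^(i+1) * q^(i*(i-1)/2 + i) * x^(i+1)
          = gb q N (i+1) * (-1)^(i+1) * q^(i*(i-1)/2+i) * x^(i+1)
            + gb q N i * (-1)^(i+1) * (q^(N-i) * q^(i*(i-1)/2+i)) * x^(i+1) := by ring
        _ = _ := by rw [hq]; ring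
    rw [Finset.sum_congr rfl hsplit, Finset.sum_add_distrib, ← Finset.mul_sum, ← ih]
    have hback : (∑ i ∈ Finset.range (N+1),
        gb q N (i+1) * (-1)^(i+1) * q^((i+1)*((i+1)-1)/2) * x^(i+1))
        + gb q (N+1) 0 * (-1)^0 * q^(0*(0-1)/2) * x^0
        = qPoch x q N := by
      rw [ih, Finset.sum_range_succ, gb_eq_zero q (by omega : N < N + 1)]
      rw [Finset.sum_range_succ']
      simp [gb_zero_right]
    rw [add_right_comm, hback, qPoch_succ]
    ring
end QPochAux

namespace QPochAux
variable {F : Type*} [Field F]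

lemma gauss (m : ℕ) : ∑ i ∈ Finset.range m, i = m * (m-1) / 2 := by
  have := Finset.sum_range_id_mul_two m
  omega

lemma poch_neg (Q : F) (hQ : Q ≠ 0) {m N : ℕ} (h : m ≤ N) :
    qPoch (Q^(-(N:ℤ))) Q m * Q^(N*m) * qPoch Q Q (N-m)
      = (-1)^m * Q^(m*(m-1)/2) * qPoch Q Q N := by
  have h1 : qPoch (Q^(-(N:ℤ))) Q m * Q^(N*m)
      = (-1)^m * Q^(m*(m-1)/2) * ∏ i ∈ Finset.range m, (1 - Q^(N-i)) := by
    have hc : Q^(N*m) = ∏ _i ∈ Finset.range m, Q^N := by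
      rw [Finset.prod_const, Finset.card_range, ← pow_mul]
    rw [qPoch, hc, ← Finset.prod_mul_distrib]
    have hstep : ∀ i ∈ Finset.range m,
        (1 - Q^(-(N:ℤ)) * Q^i) * Q^N = (-1) * Q^i * (1 - Q^(N-i)) := by
      intro i hi
      rw [Finset.mem_range] at hi
      have hz : Q^(-(N:ℤ)) * Q^(N:ℕ) = 1 := by
        rw [← zpow_natCast Q N, ← zpow_add₀ hQ]
        simp
      have hp : Q^i * Q^(N-i) = Q^N := by
        rw [← pow_add]; congr 1; omega
      linear_combination (-(Q^i)) * hz - hp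
    rw [Finset.prod_congr rfl hstep, Finset.prod_mul_distrib, Finset.prod_mul_distrib,
      Finset.prod_const, Finset.card_range, Finset.prod_pow_eq_pow_sum, gauss]
  have h2 : (∏ i ∈ Finset.range m, (1 - Q^(N-i))) * qPoch Q Q (N-m) = qPoch Q Q N := by
    conv_rhs => rw [show N = (N-m)+m from by omega, qPoch_add]
    rw [mul_comm]
    congr 1
    rw [← Finset.prod_range_reflect, qPoch]
    refine Finset.prod_congr rfl fun i hi => ?_
    rw [Finset.mem_range] at hi
    congr 1
    have hmul : Q * Q^(N-m) * Q^i = Q^(1 + (N-m) + i) := by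
      rw [pow_add, pow_add, pow_one]
    rw [hmul]
    congr 1
    omega
  rw [h1, mul_assoc, h2]

lemma key (Q x : F) (hQ : Q ≠ 0) (N : ℕ) (hN : qPoch Q Q N ≠ 0) :
    ∑ m ∈ Finset.range (N+1),
      qPoch (Q^(-(N:ℤ))) Q m / qPoch Q Q m * (x * Q^(N:ℕ))^m
    = qPoch x Q N := by
  rw [qbt Q x N]
  refine Finset.sum_congr rfl fun m hm => ?_
  rw [Finset.mem_range] at hm
  have hmN : m ≤ N := by omega
  have hm1 : qPoch Q Q m ≠ 0 := qPoch_ne_zero_of_le hmN hN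
  have hm2 : qPoch Q Q (N-m) ≠ 0 := qPoch_ne_zero_of_le (by omega) hN
  have h3 := poch_neg Q hQ hmN
  have h4 := gb_mul Q m (N-m)
  rw [show m + (N-m) = N from by omega] at h4
  rw [mul_pow, ← pow_mul, div_mul_eq_mul_div, div_eq_iff hm1]
  apply mul_right_cancel₀ hm2
  linear_combination x^m * h3 - ((-1)^m * Q^(m*(m-1)/2) * x^m) * h4
end QPochAux


open QPochAux

/-- The `B → ∞` limiting case of the transformation formula for a terminating
`₂φ₁` basic hypergeometric series. -/
theorem limit_terminating_two_phi_one_transformation {F : Type*} [Field F] (n : ℕ)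
    (Q C Z : F) (hQ : Q ≠ 0) (hC : C ≠ 0)
    (hQn : qPoch Q Q n ≠ 0) (hCn : qPoch C Q n ≠ 0) :
    ∑ k ∈ Finset.range (n + 1),
      qPoch (Q ^ (-(n : ℤ))) Q k * (-1) ^ k * Q ^ (k * (k - 1) / 2)
        / (qPoch Q Q k * qPoch C Q k) * Z ^ k
    = (qPoch C Q n)⁻¹ *
      ∑ k ∈ Finset.range (n + 1),
        qPoch (Q ^ (-(n : ℤ))) Q k * qPoch (Z * Q ^ (-(n : ℤ)) / C) Q k / qPoch Q Q k
          * Q ^ k * (C * Q ^ ((n : ℤ) - 1)) ^ k := by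
  have hqmQ : Q ^ (-(n:ℤ)) * Q ^ (n:ℕ) = 1 := by
    rw [← zpow_natCast Q n, ← zpow_add₀ hQ]; simp
  set qm := Q ^ (-(n:ℤ)) with hqm
  have hR : (∑ j ∈ Finset.range (n+1),
      qPoch qm Q j * qPoch (Z * qm / C) Q j / qPoch Q Q j * Q ^ j * (C * Q ^ ((n:ℤ) - 1)) ^ j)
      = ∑ k ∈ Finset.range (n+1), qPoch C Q n *
        (qPoch qm Q k * (-1) ^ k * Q ^ (k * (k - 1) / 2)
          / (qPoch Q Q k * qPoch C Q k) * Z ^ k) := by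
    have step1 : ∀ j ∈ Finset.range (n+1),
        qPoch qm Q j * qPoch (Z * qm / C) Q j / qPoch Q Q j * Q ^ j * (C * Q ^ ((n:ℤ) - 1)) ^ j
        = ∑ k ∈ Finset.range (n+1),
          qPoch qm Q j * (gb Q j k * (-1) ^ k * Q ^ (k * (k - 1) / 2) * (Z * qm / C) ^ k)
            / qPoch Q Q j * Q ^ j * (C * Q ^ ((n:ℤ) - 1)) ^ j := by
      intro j hj
      rw [Finset.mem_range] at hj
      rw [qbt Q (Z * qm / C) j]
      have hext : (∑ k ∈ Finset.range (j+1),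
          gb Q j k * (-1) ^ k * Q ^ (k * (k - 1) / 2) * (Z * qm / C) ^ k)
          = ∑ k ∈ Finset.range (n+1),
          gb Q j k * (-1) ^ k * Q ^ (k * (k - 1) / 2) * (Z * qm / C) ^ k := by
        refine Finset.sum_subset (Finset.range_subset_range.mpr (by omega)) fun x _ hx => ?_
        rw [Finset.mem_range, not_lt] at hx
        rw [gb_eq_zero Q (by omega)]
        ring
      rw [hext, Finset.mul_sum, Finset.sum_div, Finset.sum_mul, Finset.sum_mul]
    rw [Finset.sum_congr rfl step1, Finset.sum_comm]
    refine Finset.sum_congr rfl fun k hk => ?_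
    rw [Finset.mem_range] at hk
    have hkn : k ≤ n := by omega
    have hPQk : qPoch Q Q k ≠ 0 := qPoch_ne_zero_of_le hkn hQn
    have hPCk : qPoch C Q k ≠ 0 := qPoch_ne_zero_of_le hkn hCn
    have hrestrict : (∑ j ∈ Finset.range (n+1),
        qPoch qm Q j * (gb Q j k * (-1) ^ k * Q ^ (k * (k - 1) / 2) * (Z * qm / C) ^ k)
          / qPoch Q Q j * Q ^ j * (C * Q ^ ((n:ℤ) - 1)) ^ j)
        = ∑ j ∈ Finset.Ico k (n+1),
        qPoch qm Q j * (gb Q j k * (-1) ^ k * Q ^ (k * (k - 1) / 2) * (Z * qm / C) ^ k)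
          / qPoch Q Q j * Q ^ j * (C * Q ^ ((n:ℤ) - 1)) ^ j := by
      refine (Finset.sum_subset (fun x hx => ?_) fun x hx hnx => ?_).symm
      · rw [Finset.mem_Ico] at hx; rw [Finset.mem_range]; omega
      · rw [Finset.mem_range] at hx
        have hxk : x < k := by
          rcases lt_or_ge x k with h | h
          · exact h
          · exact absurd (Finset.mem_Ico.mpr ⟨h, hx⟩) hnx
        rw [gb_eq_zero Q hxk]
        ring
    rw [hrestrict, Finset.sum_Ico_eq_sum_range, show n+1-k = (n-k)+1 from by omega]
    have hqmk : Q ^ (-((n-k : ℕ) : ℤ)) = qm * Q ^ k := by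
      rw [hqm, ← zpow_natCast Q k, ← zpow_add₀ hQ]
      congr 1
      omega
    have hpow : ∀ i : ℕ, Q ^ (k+i) * (C * Q ^ ((n:ℤ)-1)) ^ (k+i)
        = ((C * Q ^ k) * Q ^ ((n-k : ℕ))) ^ k * ((C * Q ^ k) * Q ^ ((n-k:ℕ))) ^ i := by
      intro i
      have hQn' : Q * Q ^ ((n:ℤ)-1) = Q ^ (n:ℕ) :=
        calc Q * Q ^ ((n:ℤ)-1) = Q ^ (1:ℤ) * Q ^ ((n:ℤ)-1) := by rw [zpow_one]
          _ = Q ^ ((1:ℤ) + ((n:ℤ)-1)) := (zpow_add₀ hQ _ _).symm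
          _ = Q ^ ((n:ℤ)) := by congr 1; ring
          _ = Q ^ (n:ℕ) := zpow_natCast Q n
      have hk2 : Q ^ (n:ℕ) = Q ^ k * Q ^ ((n-k:ℕ)) := by
        rw [← pow_add]; congr 1; omega
      have h1 : Q * (C * Q ^ ((n:ℤ)-1)) = (C * Q ^ k) * Q ^ ((n-k:ℕ)) := by
        rw [mul_left_comm, hQn', hk2, mul_assoc]
      rw [← mul_pow, h1, pow_add]
    have hterm : ∀ i ∈ Finset.range ((n-k)+1),
        qPoch qm Q (k+i) * (gb Q (k+i) k * (-1)^k * Q^(k*(k-1)/2) * (Z*qm/C)^k)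
          / qPoch Q Q (k+i) * Q^(k+i) * (C*Q^((n:ℤ)-1))^(k+i)
        = (qPoch qm Q k * (-1)^k * Q^(k*(k-1)/2) * (Z*qm/C)^k
            * ((C*Q^k)*Q^((n-k:ℕ)))^k / qPoch Q Q k)
          * (qPoch (Q ^ (-((n-k:ℕ):ℤ))) Q i / qPoch Q Q i * ((C*Q^k) * Q^((n-k:ℕ)))^i) := by
      intro i hi
      rw [Finset.mem_range] at hi
      have hki : k + i ≤ n := by omega
      have hPki : qPoch Q Q (k+i) ≠ 0 := qPoch_ne_zero_of_le hki hQn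
      have hPi : qPoch Q Q i ≠ 0 := qPoch_ne_zero_of_le (by omega) hQn
      have h4 := gb_mul Q k i
      have hgb : gb Q (k+i) k = qPoch Q Q (k+i) / (qPoch Q Q k * qPoch Q Q i) := by
        rw [eq_div_iff (mul_ne_zero hPQk hPi), ← h4]; ring
      rw [mul_assoc, hpow i, hqmk, qPoch_add qm Q k i, hgb]
      field_simp
    rw [Finset.sum_congr rfl hterm, ← Finset.mul_sum,
      key Q (C*Q^k) hQ (n-k) (qPoch_ne_zero_of_le (by omega) hQn)]
    have hCsplit : qPoch (C*Q^k) Q (n-k) = qPoch C Q n / qPoch C Q k := by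
      have h5 := qPoch_add C Q k (n-k)
      rw [show k+(n-k) = n from by omega] at h5
      rw [eq_div_iff hPCk, mul_comm, ← h5]
    rw [hCsplit]
    have hZk : (Z*qm/C)^k * ((C*Q^k)*Q^((n-k:ℕ)))^k = Z^k := by
      rw [← mul_pow]
      congr 1
      have hq2 : Q^k * Q^((n-k:ℕ)) = Q^(n:ℕ) := by rw [← pow_add]; congr 1; omega
      field_simp
      linear_combination Z * qm * hq2 + Z * hqmQ
    have hcomb : qPoch qm Q k * (-1)^k * Q^(k*(k-1)/2) * (Z*qm/C)^k
        * ((C*Q^k)*Q^((n-k:ℕ)))^k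
        = qPoch qm Q k * (-1)^k * Q^(k*(k-1)/2) * Z^k := by
      rw [mul_assoc, hZk]
    rw [hcomb]
    field_simp
  rw [hR, ← Finset.mul_sum, inv_mul_cancel_left₀ hCn]
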